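/- Let f : ℝ → ℝ satisfy f(0) = 0 and be differentiable everywhere with f'(t) = (1 + 2 f(t)²)^{-1/2} for all t ∈ ℝ. Then for every t > 0 one has (1/2) f(t) ≤ t · (1 + 2 f(t)²)^{-1/2} ≤ f(t), i.e., (1/2) f(t) ≤ t f'(t) ≤ f(t). -/

import Mathlib

/-- Lemma 2.1 (4): for `t > 0`, `(1/2) f(t) ≤ t f'(t) ≤ f(t)`,
where `f'(t) = (1 + 2 f(t)²)^(-1/2)`. -/
theorem dual_change_of_variables_tfprime (f : ℝ → ℝ)
    (hf0 : f 0 = 0)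
    (hf : ∀ t : ℝ, HasDerivAt f ((1 + 2 * (f t) ^ 2) ^ (-(1 / 2 : ℝ))) t) :
    ∀ t : ℝ, 0 < t →
      (1 / 2) * f t ≤ t * (1 + 2 * (f t) ^ 2) ^ (-(1 / 2 : ℝ)) ∧
      t * (1 + 2 * (f t) ^ 2) ^ (-(1 / 2 : ℝ)) ≤ f t := by
  have hu : ∀ t : ℝ, (0:ℝ) < 1 + 2 * (f t) ^ 2 := fun t => by positivity
  set s : ℝ → ℝ := fun t => Real.sqrt (1 + 2 * (f t) ^ 2) with hs_def
  have hs_pos : ∀ t, 0 < s t := fun t => Real.sqrt_pos.mpr (hu t)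
  have hs_one : ∀ t, 1 ≤ s t := fun t => by
    show (1:ℝ) ≤ Real.sqrt (1 + 2 * (f t) ^ 2)
    nlinarith [Real.sq_sqrt (hu t).le, Real.sqrt_nonneg (1 + 2 * (f t) ^ 2), sq_nonneg (f t)]
  have hs_sq : ∀ t, s t ^ 2 = 1 + 2 * (f t) ^ 2 := fun t => Real.sq_sqrt (hu t).le
  have hd : ∀ t, (1 + 2 * (f t) ^ 2) ^ (-(1 / 2 : ℝ)) = (s t)⁻¹ := fun t => by
    show _ = (Real.sqrt (1 + 2 * (f t) ^ 2))⁻¹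
    rw [Real.rpow_neg (hu t).le, Real.sqrt_eq_rpow]
  -- f is strictly monotone, hence positive on (0, ∞)
  have hmono : StrictMono f :=
    strictMono_of_deriv_pos (fun t => by
      rw [(hf t).deriv]; exact Real.rpow_pos_of_pos (hu t) _)
  have hfpos : ∀ t : ℝ, 0 < t → 0 < f t := fun t ht => hf0 ▸ hmono ht
  -- auxiliary function G with G' = 1
  set G : ℝ → ℝ := fun t =>
    f t * s t / 2 + Real.arsinh (Real.sqrt 2 * f t) / (2 * Real.sqrt 2) with hG_def
  have hG' : ∀ t, HasDerivAt G 1 t := by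
    intro t
    have hfd := hf t
    have hs' : HasDerivAt s
        ((2 * (2 * f t ^ 1 * ((1 + 2 * (f t) ^ 2) ^ (-(1 / 2 : ℝ))))) /
          (2 * s t)) t := by
      have h1 : HasDerivAt (fun x => 1 + 2 * f x ^ 2)
          (2 * (2 * f t ^ 1 * ((1 + 2 * (f t) ^ 2) ^ (-(1 / 2 : ℝ))))) t :=
        ((hfd.pow 2).const_mul 2).const_add 1
      exact h1.sqrt (by positivity)
    have harsinh : HasDerivAt (fun x => Real.arsinh (Real.sqrt 2 * f x))
        ((Real.sqrt (1 + (Real.sqrt 2 * f t) ^ 2))⁻¹ *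
          (Real.sqrt 2 * ((1 + 2 * (f t) ^ 2) ^ (-(1 / 2 : ℝ))))) t :=
      (Real.hasDerivAt_arsinh _).comp t (hfd.const_mul (Real.sqrt 2))
    have key : HasDerivAt G
        ((((1 + 2 * (f t) ^ 2) ^ (-(1 / 2 : ℝ))) * s t +
            f t * ((2 * (2 * f t ^ 1 * ((1 + 2 * (f t) ^ 2) ^ (-(1 / 2 : ℝ))))) /
              (2 * s t))) / 2 +
          ((Real.sqrt (1 + (Real.sqrt 2 * f t) ^ 2))⁻¹ *
            (Real.sqrt 2 * ((1 + 2 * (f t) ^ 2) ^ (-(1 / 2 : ℝ))))) /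
            (2 * Real.sqrt 2)) t :=
      ((hfd.mul hs').div_const 2).add (harsinh.div_const (2 * Real.sqrt 2))
    convert key using 1
    have h2 : (1 + (Real.sqrt 2 * f t) ^ 2) = 1 + 2 * f t ^ 2 := by
      rw [mul_pow, Real.sq_sqrt (by norm_num : (0:ℝ) ≤ 2)]
    rw [h2]
    have hsne : s t ≠ 0 := (hs_pos t).ne'
    have h2ne : Real.sqrt 2 ≠ 0 := by positivity
    rw [hd t]
    have hss : Real.sqrt (1 + 2 * (f t) ^ 2) = s t := rfl
    rw [hss]
    have hsq := hs_sq t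
    field_simp
    linear_combination hsq
  -- hence G t = t
  have hGt : ∀ t : ℝ, G t = t := by
    intro t
    have hdiff : Differentiable ℝ (fun x => G x - x) :=
      fun x => ((hG' x).sub (hasDerivAt_id x)).differentiableAt
    have hz : ∀ x, deriv (fun x => G x - x) x = 0 := fun x => by
      have := ((hG' x).sub (hasDerivAt_id x)).deriv
      exact this.trans (by norm_num)
    have := is_const_of_deriv_eq_zero hdiff hz t 0
    have hG0 : G 0 = 0 := by simp [hG_def, hf0]
    simp [hG0] at this
    linarith
  -- conclude
  intro t ht
  have hft := hfpos t ht
  rw [hd t]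
  have hsne : s t ≠ 0 := (hs_pos t).ne'
  have hA : 0 ≤ Real.arsinh (Real.sqrt 2 * f t) :=
    Real.arsinh_nonneg_iff.mpr (by positivity)
  have hAle : Real.arsinh (Real.sqrt 2 * f t) ≤ Real.sqrt 2 * f t := by
    calc Real.arsinh (Real.sqrt 2 * f t)
        ≤ Real.arsinh (Real.sinh (Real.sqrt 2 * f t)) :=
          Real.arsinh_le_arsinh.mpr (Real.self_le_sinh_iff.mpr (by positivity))
      _ = Real.sqrt 2 * f t := Real.arsinh_sinh _
  have h2pos : (0:ℝ) < Real.sqrt 2 := by positivity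
  have hG : f t * s t / 2 + Real.arsinh (Real.sqrt 2 * f t) / (2 * Real.sqrt 2) = t :=
    hGt t
  have hkey : t * (s t)⁻¹ =
      f t / 2 + Real.arsinh (Real.sqrt 2 * f t) / (2 * Real.sqrt 2 * s t) := by
    have h2 := congrArg (· * (s t)⁻¹) hG
    rw [← h2]
    field_simp
  constructor
  · rw [hkey]
    have h0 : 0 ≤ Real.arsinh (Real.sqrt 2 * f t) / (2 * Real.sqrt 2 * s t) := by
      positivity
    linarith
  · rw [hkey]
    have hbd : Real.arsinh (Real.sqrt 2 * f t) / (2 * Real.sqrt 2 * s t) ≤ f t / 2 := by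
      rw [div_le_div_iff₀ (by positivity) (by norm_num)]
      nlinarith [hAle, hs_one t, hft.le, h2pos]
    linarith
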